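/- Let ρ(x,y) = (4 h(x) Q(y) - 4 L(x,y)² - 4 ⟨c', y⟩ L(x,y) - ⟨c', y⟩²)/(2h(x))², where Q(y) = ∑ c_{ij} y^i y^j and L(x,y) = ∑ c_{ij} x^i y^j. Then the horizontal derivative vanishes: ∂ρ/∂x^k - β · ∂ρ/∂y^k - 2 ρ b_k = 0 for each k, where β(x,y) = ∑_j b_j(x) y^j and b_k(x) = -(2 ∑_i c_{ik} x^i + c_k)/(2h(x)). -/

import Mathlib

open Finset

/-- Partial derivative of `f` with respect to the `i`-th coordinate at `x`. -/
noncomputable def pd {n : ℕ} (i : Fin n) (f : (Fin n → ℝ) → ℝ) (x : Fin n → ℝ) : ℝ :=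
  deriv (fun t => f (Function.update x i t)) (x i)

/-- Partial derivative with respect to the `i`-th `x`-coordinate. -/
noncomputable def pdx {n : ℕ} (i : Fin n) (f : (Fin n → ℝ) → (Fin n → ℝ) → ℝ)
    (x y : Fin n → ℝ) : ℝ :=
  deriv (fun t => f (Function.update x i t) y) (x i)

/-- Partial derivative with respect to the `i`-th `y`-coordinate. -/
noncomputable def pdy {n : ℕ} (i : Fin n) (f : (Fin n → ℝ) → (Fin n → ℝ) → ℝ)
    (x y : Fin n → ℝ) : ℝ :=
  deriv (fun t => f x (Function.update y i t)) (y i)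

lemma upd_hasDerivAt {n : ℕ} (x : Fin n → ℝ) (k i : Fin n) (t : ℝ) :
    HasDerivAt (fun s => Function.update x k s i) (if i = k then 1 else 0) t := by
  rcases eq_or_ne i k with rfl | hik
  · simpa using (hasDerivAt_id' t)
  · simpa [Function.update_of_ne hik, hik] using (hasDerivAt_const t (x i))

lemma bilin_fst {n : ℕ} (C : Fin n → Fin n → ℝ) (u v : Fin n → ℝ) (k : Fin n) :
    HasDerivAt (fun t => ∑ i, ∑ j, C i j * Function.update u k t i * v j)
      (∑ j, C k j * v j) (u k) := by
  have H := HasDerivAt.fun_sum (fun i (_ : i ∈ Finset.univ) =>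
    HasDerivAt.fun_sum (fun j (_ : j ∈ Finset.univ) =>
      (((hasDerivAt_const (u k) (C i j)).fun_mul (upd_hasDerivAt u k i (u k))).fun_mul
        (hasDerivAt_const (u k) (v j)))))
  refine H.congr_deriv (Eq.symm ?_)
  simp [Function.update_eq_self, mul_ite, ite_mul, Finset.sum_ite_eq']

lemma bilin_snd {n : ℕ} (C : Fin n → Fin n → ℝ) (u v : Fin n → ℝ) (k : Fin n) :
    HasDerivAt (fun t => ∑ i, ∑ j, C i j * u i * Function.update v k t j)
      (∑ i, C i k * u i) (v k) := by
  have H := HasDerivAt.fun_sum (fun i (_ : i ∈ Finset.univ) =>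
    HasDerivAt.fun_sum (fun j (_ : j ∈ Finset.univ) =>
      ((hasDerivAt_const (v k) (C i j * u i)).fun_mul (upd_hasDerivAt v k j (v k)))))
  refine H.congr_deriv (Eq.symm ?_)
  simp [Function.update_eq_self, mul_ite, ite_mul, Finset.sum_ite_eq']

lemma bilin_both {n : ℕ} (C : Fin n → Fin n → ℝ) (u : Fin n → ℝ) (k : Fin n) :
    HasDerivAt (fun t => ∑ i, ∑ j, C i j * Function.update u k t i * Function.update u k t j)
      ((∑ j, C k j * u j) + ∑ i, C i k * u i) (u k) := by
  have H := HasDerivAt.fun_sum (fun i (_ : i ∈ Finset.univ) =>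
    HasDerivAt.fun_sum (fun j (_ : j ∈ Finset.univ) =>
      (((hasDerivAt_const (u k) (C i j)).fun_mul (upd_hasDerivAt u k i (u k))).fun_mul
        (upd_hasDerivAt u k j (u k)))))
  refine H.congr_deriv (Eq.symm ?_)
  simp [Function.update_eq_self, mul_ite, ite_mul, Finset.sum_ite_eq', Finset.sum_add_distrib]

lemma lin_upd {n : ℕ} (c' : Fin n → ℝ) (u : Fin n → ℝ) (k : Fin n) :
    HasDerivAt (fun t => ∑ m, c' m * Function.update u k t m) (c' k) (u k) := by
  have H := HasDerivAt.fun_sum (fun m (_ : m ∈ Finset.univ) =>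
    ((hasDerivAt_const (u k) (c' m)).fun_mul (upd_hasDerivAt u k m (u k))))
  refine H.congr_deriv (Eq.symm ?_)
  simp [mul_ite, ite_mul, Finset.sum_ite_eq']

/-- The horizontal derivative of the Ricci scalar vanishes:
`∂ρ/∂x^k - β ∂ρ/∂y^k - 2 ρ b_k = 0`. -/
theorem stmt3 (n : ℕ) (hn : 1 ≤ n) (C : Fin n → Fin n → ℝ) (c' : Fin n → ℝ) (c : ℝ)
    (hsym : ∀ i j, C i j = C j i)
    (h : (Fin n → ℝ) → ℝ)
    (hh : ∀ x, h x = (∑ i, ∑ j, C i j * x i * x j) + (∑ k, c' k * x k) + c)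
    (b : Fin n → (Fin n → ℝ) → ℝ)
    (hb : ∀ k x, b k x = -(2 * (∑ i, C i k * x i) + c' k) / (2 * h x))
    (β : (Fin n → ℝ) → (Fin n → ℝ) → ℝ)
    (hβ : ∀ x y, β x y = ∑ k, b k x * y k)
    (ρ : (Fin n → ℝ) → (Fin n → ℝ) → ℝ)
    (hρ : ∀ x y, ρ x y =
      (4 * h x * (∑ i, ∑ j, C i j * y i * y j)
          - 4 * (∑ i, ∑ j, C i j * x i * y j) ^ 2
          - 4 * (∑ k, c' k * y k) * (∑ i, ∑ j, C i j * x i * y j)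
          - (∑ k, c' k * y k) ^ 2)
        / (2 * h x) ^ 2) :
    ∀ x y : Fin n → ℝ, h x > 0 → ∀ k,
      pdx k ρ x y - β x y * pdy k ρ x y - 2 * ρ x y * b k x = 0 := by
  intro x y hx k
  have hxne : h x ≠ 0 := ne_of_gt hx
  set Sx : ℝ := ∑ i, C i k * x i with hSx
  set Sy : ℝ := ∑ i, C i k * y i with hSy
  set L : ℝ := ∑ i, ∑ j, C i j * x i * y j with hL
  set Q : ℝ := ∑ i, ∑ j, C i j * y i * y j with hQ
  set P : ℝ := ∑ m, c' m * y m with hP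
  have esymx : (∑ j, C k j * x j) = Sx :=
    Finset.sum_congr rfl (fun j _ => by rw [hsym])
  have esymy : (∑ j, C k j * y j) = Sy :=
    Finset.sum_congr rfl (fun j _ => by rw [hsym])
  -- derivative of h along x-direction k
  have hH : HasDerivAt (fun t => h (Function.update x k t)) (2 * Sx + c' k) (x k) := by
    have e : (fun t => h (Function.update x k t))
        = fun t => (∑ i, ∑ j, C i j * Function.update x k t i * Function.update x k t j)
          + (∑ m, c' m * Function.update x k t m) + c := funext fun t => hh _
    rw [e]
    have := ((bilin_both C x k).fun_add (lin_upd c' x k)).add_const c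
    refine this.congr_deriv (Eq.symm ?_)
    rw [esymx]; ring
  -- derivative of L along x-direction k
  have hLx : HasDerivAt (fun t => ∑ i, ∑ j, C i j * Function.update x k t i * y j)
      Sy (x k) := by
    have := bilin_fst C x y k
    rwa [esymy] at this
  -- numerator along x
  have hNumX : HasDerivAt
      (fun t => 4 * h (Function.update x k t) * Q
        - 4 * (∑ i, ∑ j, C i j * Function.update x k t i * y j) ^ 2
        - 4 * P * (∑ i, ∑ j, C i j * Function.update x k t i * y j) - P ^ 2)
      (4 * (2 * Sx + c' k) * Q - 4 * (2 * L * Sy) - 4 * P * Sy) (x k) := by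
    have h1 := (hH.const_mul 4).mul_const Q
    have h2 := (hLx.fun_pow 2).const_mul 4
    have h3 := hLx.const_mul (4 * P)
    have := ((h1.fun_sub h2).fun_sub h3).sub_const (P ^ 2)
    refine this.congr_deriv (Eq.symm ?_)
    have : Function.update x k (x k) = x := Function.update_eq_self k x
    rw [this]
    push_cast
    rw [← hL]
    ring
  -- denominator along x
  have hDenX : HasDerivAt (fun t => (2 * h (Function.update x k t)) ^ 2)
      (2 * (2 * h x) * (2 * (2 * Sx + c' k))) (x k) := by
    have := (hH.const_mul 2).fun_pow 2
    refine this.congr_deriv (Eq.symm ?_)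
    rw [Function.update_eq_self k x]
    push_cast
    ring
  have hdenne : ((fun t => (2 * h (Function.update x k t)) ^ 2) (x k)) ≠ 0 := by
    simp only [Function.update_eq_self]
    positivity
  have hpdx : pdx k ρ x y =
      ((4 * (2 * Sx + c' k) * Q - 4 * (2 * L * Sy) - 4 * P * Sy) * (2 * h x) ^ 2
        - (4 * h x * Q - 4 * L ^ 2 - 4 * P * L - P ^ 2)
          * (2 * (2 * h x) * (2 * (2 * Sx + c' k))))
      / ((2 * h x) ^ 2) ^ 2 := by
    have hdiv := hNumX.fun_div hDenX hdenne
    have e : (fun t => ρ (Function.update x k t) y)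
        = (fun t => (4 * h (Function.update x k t) * Q
            - 4 * (∑ i, ∑ j, C i j * Function.update x k t i * y j) ^ 2
            - 4 * P * (∑ i, ∑ j, C i j * Function.update x k t i * y j) - P ^ 2)
            / (2 * h (Function.update x k t)) ^ 2) := funext fun t => hρ _ _
    rw [pdx, e, hdiv.deriv]
    simp only [Function.update_eq_self]
    rw [← hL]
  -- y-direction
  have hQy : HasDerivAt
      (fun t => ∑ i, ∑ j, C i j * Function.update y k t i * Function.update y k t j)
      (2 * Sy) (y k) := by
    have := bilin_both C y k
    rw [esymy] at this
    refine this.congr_deriv (Eq.symm ?_); ring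
  have hLy : HasDerivAt (fun t => ∑ i, ∑ j, C i j * x i * Function.update y k t j)
      Sx (y k) := bilin_snd C x y k
  have hPy : HasDerivAt (fun t => ∑ m, c' m * Function.update y k t m) (c' k) (y k) :=
    lin_upd c' y k
  have hNumY : HasDerivAt
      (fun t => 4 * h x * (∑ i, ∑ j, C i j * Function.update y k t i * Function.update y k t j)
        - 4 * (∑ i, ∑ j, C i j * x i * Function.update y k t j) ^ 2
        - 4 * (∑ m, c' m * Function.update y k t m)
            * (∑ i, ∑ j, C i j * x i * Function.update y k t j)
        - (∑ m, c' m * Function.update y k t m) ^ 2)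
      (4 * h x * (2 * Sy) - 4 * (2 * L * Sx) - (4 * c' k * L + 4 * P * Sx)
        - 2 * P * c' k) (y k) := by
    have h1 := hQy.const_mul (4 * h x)
    have h2 := (hLy.fun_pow 2).const_mul 4
    have h3 := (hPy.const_mul 4).fun_mul hLy
    have h4 := hPy.fun_pow 2
    have := ((h1.fun_sub h2).fun_sub h3).fun_sub h4
    refine this.congr_deriv (Eq.symm ?_)
    rw [Function.update_eq_self k y]
    push_cast
    rw [← hL, ← hP]
    ring
  have hpdy : pdy k ρ x y =
      (4 * h x * (2 * Sy) - 4 * (2 * L * Sx) - (4 * c' k * L + 4 * P * Sx)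
        - 2 * P * c' k) / (2 * h x) ^ 2 := by
    have hdiv := hNumY.div_const ((2 * h x) ^ 2)
    have e : (fun t => ρ x (Function.update y k t))
        = (fun t => (4 * h x
            * (∑ i, ∑ j, C i j * Function.update y k t i * Function.update y k t j)
            - 4 * (∑ i, ∑ j, C i j * x i * Function.update y k t j) ^ 2
            - 4 * (∑ m, c' m * Function.update y k t m)
                * (∑ i, ∑ j, C i j * x i * Function.update y k t j)
            - (∑ m, c' m * Function.update y k t m) ^ 2)
            / (2 * h x) ^ 2) := funext fun t => hρ _ _
    rw [pdy, e, hdiv.deriv]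
  -- β value
  have hβval : β x y = -(2 * L + P) / (2 * h x) := by
    rw [hβ]
    have e1 : ∀ j ∈ Finset.univ, b j x * y j
        = (-(2 * ((∑ i, C i j * x i) * y j) + c' j * y j)) / (2 * h x) := by
      intro j _
      rw [hb]
      field_simp
    rw [Finset.sum_congr rfl e1, ← Finset.sum_div]
    congr 1
    have e2 : (∑ j, (∑ i, C i j * x i) * y j) = L := by
      rw [hL, Finset.sum_comm]
      exact Finset.sum_congr rfl (fun j _ => by rw [Finset.sum_mul])
    rw [hP, ← e2, Finset.mul_sum, ← Finset.sum_add_distrib, ← Finset.sum_neg_distrib]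
  rw [hpdx, hpdy, hβval, hρ x y, hb k x, ← hQ, ← hL, ← hP, ← hSx]
  field_simp
  ring
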